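/- Characterization of the image of T: a pair (π′, σ′) ∈ B(n) ∪ C(n) lies in T(A(n)) if and only if the backward alternating chain starting from man n (following affair then marriage edges: starting with w such that σ′ pairs n with w, then the husband of w under π′, etc.) terminates at woman 1′ (when (π′,σ′) ∈ C(n)) or at woman n′ (when (π′,σ′) ∈ B(n)) rather than at man 1. -/

import Mathlib

/- We work with `n + 2` people of each sex (so the number of people is at least 2),
men and women both indexed by `Fin (n+2)`; man `0` is "Mr. 1" and man `Fin.last (n+1)`
is "Mr. n", and similarly for women.

A pair `(π, σ)` of total permutations of `Fin (n+2)` encodes an element of one of the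
sets `A(n)`, `B(n)`, `C(n)` of pairs (marriage matching, affair matching) of
Zeilberger's proof, via dummy values at the unused points:
* `A(n)`: `π` is the marriage matching of all men to all women, and the affair
  matching `{2,…,n-1} → {2',…,(n-1)'}` is encoded by a permutation `σ` fixing the
  endpoints `0` and `last`.
* `B(n)`: the marriage matching `{1,…,n-1} → {1',…,(n-1)'}` is encoded by `π` with the
  dummy value `π last = last`, and the affair matching `{2,…,n} → {2',…,n'}` by `σ`
  with dummy value `σ 0 = 0`.
* `C(n)`: the marriage matching `{1,…,n-1} → {2',…,n'}` is encoded by `π` with dummy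
  value `π last = 0`, and the affair matching `{2,…,n} → {1',…,(n-1)'}` by `σ` with
  dummy value `σ 0 = last`. -/

/-- A pair (marriages, affairs) of permutations. -/
abbrev PairPerm (n : ℕ) := Equiv.Perm (Fin (n + 2)) × Equiv.Perm (Fin (n + 2))

/-- The last index (Mr./Ms. `n`). -/
def lastF (n : ℕ) : Fin (n + 2) := Fin.last (n + 1)

/-- The middle indices `{2,…,n-1}` (people having affairs in `A(n)`). -/
def middleF (n : ℕ) : Finset (Fin (n + 2)) := (Finset.univ.erase 0).erase (lastF n)

/-- Membership in `A(n)`: the affair permutation fixes the two endpoints. -/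
def InA {n : ℕ} (p : PairPerm n) : Prop := p.2 0 = 0 ∧ p.2 (lastF n) = lastF n

/-- Membership in `B(n)`: dummy marriage `n ↦ n'`, dummy affair `1 ↦ 1'`. -/
def InB {n : ℕ} (p : PairPerm n) : Prop := p.1 (lastF n) = lastF n ∧ p.2 0 = 0

/-- Membership in `C(n)`: dummy marriage `n ↦ 1'`, dummy affair `1 ↦ n'`. -/
def InC {n : ℕ} (p : PairPerm n) : Prop := p.1 (lastF n) = 0 ∧ p.2 0 = lastF n

/-- The alternating chain of men: `m 0 = n`, and `m (k+1)` is the lover of the wife of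
`m k` (wife: apply `π`; lover: apply `σ⁻¹`). -/
def chainM {n : ℕ} (p : PairPerm n) : ℕ → Fin (n + 2)
  | 0 => lastF n
  | k + 1 => p.2.symm (p.1 (chainM p k))

/-- The alternating chain of women: `w k` is the wife of `m k`. -/
def chainW {n : ℕ} (p : PairPerm n) (k : ℕ) : Fin (n + 2) := p.1 (chainM p k)

/-- `TStep p q` says that `q` is obtained from `p` by Zeilberger's map `T`: along the
alternating chain `m 0 = n, w 0, m 1, w 1, …` of `p`, which terminates at the first
woman `w (r-1) ∈ {1', n'}`, marriages `(m k, w k)` become affairs and affairs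
`(m (k+1), w k)` become marriages; everything off the chain is unchanged, and the
dummy values are set according to whether the chain ended at `1'` or at `n'`. -/
def TStep {n : ℕ} (p q : PairPerm n) : Prop :=
  ∃ r : ℕ, 1 ≤ r ∧
    (∀ k, k + 1 < r → chainW p k ≠ 0 ∧ chainW p k ≠ lastF n) ∧
    (chainW p (r - 1) = 0 ∨ chainW p (r - 1) = lastF n) ∧
    (∀ i, (∀ k, k < r → i ≠ chainM p k) → q.1 i = p.1 i) ∧
    (∀ i, i ≠ 0 → (∀ k, k < r → i ≠ chainM p k) → q.2 i = p.2 i) ∧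
    (∀ k, k + 1 < r → q.1 (chainM p (k + 1)) = chainW p k) ∧
    q.1 (lastF n) = chainW p (r - 1) ∧
    (∀ k, k < r → q.2 (chainM p k) = chainW p k) ∧
    q.2 0 = (if chainW p (r - 1) = 0 then lastF n else 0)

/-- The backward alternating chain in `q ∈ B(n) ∪ C(n)`, starting from man `n`:
first follow the affair edge (apply `σ'`), then the marriage edge backwards
(apply `π'⁻¹`), and repeat. -/
def bchain {n : ℕ} (q : PairPerm n) (k : ℕ) : Fin (n + 2) :=
  (fun x => q.1.symm (q.2 x))^[k] (lastF n)

-- auxiliary lemmas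
private lemma bchain_succ {n : ℕ} (q : PairPerm n) (k : ℕ) :
    bchain q (k + 1) = q.1.symm (q.2 (bchain q k)) :=
  Function.iterate_succ_apply' _ k _

private lemma lastF_ne_zero (n : ℕ) : lastF n ≠ 0 := by
  simp [lastF, Fin.ext_iff]

private lemma forward_dir {n : ℕ} {p q : PairPerm n} (hA : InA p) (hT : TStep p q) :
    ∃ k, 1 ≤ k ∧ bchain q k = lastF n ∧ ∀ j, 1 ≤ j → j < k → bchain q j ≠ 0 := by
  obtain ⟨r, hr1, hmid, hend, hπoff, hσoff, hπchain, hπlast, hσchain, hσ0⟩ := hT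
  have hb : ∀ j, j < r → bchain q j = chainM p j := by
    intro j
    induction j with
    | zero => intro _; rfl
    | succ j ih =>
      intro hj
      have hj' : j < r := Nat.lt_of_succ_lt hj
      rw [bchain_succ, ih hj', hσchain j hj', Equiv.symm_apply_eq]
      exact (hπchain j hj).symm
  refine ⟨r, hr1, ?_, ?_⟩
  · obtain ⟨m, rfl⟩ : ∃ m, r = m + 1 := ⟨r - 1, (Nat.succ_pred_eq_of_pos hr1).symm⟩
    rw [bchain_succ, hb m (Nat.lt_succ_self m), hσchain m (Nat.lt_succ_self m),
      Equiv.symm_apply_eq]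
    simpa using hπlast.symm
  · intro j hj1 hjr h0
    obtain ⟨m, rfl⟩ : ∃ m', j = m' + 1 := ⟨j - 1, (Nat.succ_pred_eq_of_pos hj1).symm⟩
    rw [hb _ hjr] at h0
    have hm0 : chainM p (m + 1) = 0 := h0
    have : chainW p m = 0 := by
      have h2 := congrArg p.2 hm0
      simp only [chainM, Equiv.apply_symm_apply, hA.1] at h2
      exact h2
    exact (hmid m hjr).1 this

private lemma assemble {n : ℕ} {q : PairPerm n} (p : PairPerm n) (k : ℕ) (hk1 : 1 ≤ k)
    (hbk : bchain q k = lastF n)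
    (hp1 : ∀ j, j < k → p.1 (bchain q j) = q.2 (bchain q j))
    (hp2 : ∀ j, j + 1 < k → p.2 (bchain q (j + 1)) = q.2 (bchain q j))
    (hp2z : p.2 0 = 0) (hp2l : p.2 (lastF n) = lastF n)
    (hπoff : ∀ i, (∀ j, j < k → i ≠ bchain q j) → q.1 i = p.1 i)
    (hσoff : ∀ i, i ≠ 0 → (∀ j, j < k → i ≠ bchain q j) → q.2 i = p.2 i)
    (hmid : ∀ j, j + 1 < k → q.2 (bchain q j) ≠ 0 ∧ q.2 (bchain q j) ≠ lastF n)
    (hend : q.2 (bchain q (k - 1)) = 0 ∨ q.2 (bchain q (k - 1)) = lastF n)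
    (hσ0 : q.2 0 = (if q.2 (bchain q (k - 1)) = 0 then lastF n else 0)) :
    InA p ∧ TStep p q := by
  have hm : ∀ j, j < k → chainM p j = bchain q j := by
    intro j
    induction j with
    | zero => intro _; rfl
    | succ j ih =>
      intro hj
      have hj' : j < k := by omega
      show p.2.symm (p.1 (chainM p j)) = bchain q (j + 1)
      rw [ih hj', hp1 j hj', Equiv.symm_apply_eq, hp2 j hj]
  have hw : ∀ j, j < k → chainW p j = q.2 (bchain q j) := fun j hj => by
    rw [chainW, hm j hj, hp1 j hj]
  have hwlast : chainW p (k - 1) = q.2 (bchain q (k - 1)) := hw _ (by omega)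
  refine ⟨⟨hp2z, hp2l⟩, k, hk1, ?_, ?_, ?_, ?_, ?_, ?_, ?_, ?_⟩
  · intro j hj; rw [hw j (by omega)]; exact hmid j hj
  · rw [hwlast]; exact hend
  · intro i hi
    exact hπoff i (fun j hj => by rw [← hm j hj]; exact hi j hj)
  · intro i hi0 hi
    exact hσoff i hi0 (fun j hj => by rw [← hm j hj]; exact hi j hj)
  · intro j hj
    rw [hm (j + 1) hj, hw j (by omega), bchain_succ]
    exact q.1.apply_symm_apply _
  · obtain ⟨m, rfl⟩ : ∃ m, k = m + 1 := ⟨k - 1, by omega⟩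
    rw [hwlast]
    simp only [Nat.add_sub_cancel]
    rw [← hbk, bchain_succ]
    exact q.1.apply_symm_apply _
  · intro j hj; rw [hm j hj, hw j hj]
  · rw [hwlast]; exact hσ0

private lemma backward_dir {n : ℕ} {q : PairPerm n} (hq : InB q ∨ InC q)
    (h : ∃ k, 1 ≤ k ∧ bchain q k = lastF n ∧ ∀ j, 1 ≤ j → j < k → bchain q j ≠ 0) :
    ∃ p, InA p ∧ TStep p q := by
  classical
  obtain ⟨k0, hk01, hk0b, hk0z⟩ := h
  have hP : ∃ m, 1 ≤ m ∧ bchain q m = lastF n := ⟨k0, hk01, hk0b⟩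
  set k := Nat.find hP with hk_def
  have hk1 : 1 ≤ k := (Nat.find_spec hP).1
  have hbk : bchain q k = lastF n := (Nat.find_spec hP).2
  have hkle : k ≤ k0 := Nat.find_min' hP ⟨hk01, hk0b⟩
  set b := bchain q with hb_def
  have hb0 : b 0 = lastF n := rfl
  have hne0 : ∀ j, j < k → b j ≠ 0 := by
    intro j hj
    rcases Nat.eq_zero_or_pos j with rfl | hj1
    · exact lastF_ne_zero n
    · exact hk0z j hj1 (lt_of_lt_of_le hj hkle)
  have hfinj : Function.Injective (fun x : Fin (n + 2) => q.1.symm (q.2 x)) :=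
    fun a c hac => q.2.injective (q.1.symm.injective hac)
  have hbinj : ∀ i j, i < k → j < k → b i = b j → i = j := by
    have key : ∀ i j, i ≤ j → j < k → b i = b j → i = j := by
      intro i j hij hjk he
      by_contra hne
      have hd : 1 ≤ j - i := by omega
      have hlast : b (j - i) = lastF n := by
        have h2 : b j = (fun x : Fin (n + 2) => q.1.symm (q.2 x))^[i] (b (j - i)) := by
          rw [hb_def]
          show bchain q j = _
          unfold bchain
          rw [← Function.iterate_add_apply]
          congr 1
          omega
        have h1 : b i = (fun x : Fin (n + 2) => q.1.symm (q.2 x))^[i] (lastF n) := rfl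
        have h3 := (h1.symm.trans he).trans h2
        exact ((hfinj.iterate i) h3).symm
      exact (Nat.find_min hP (show j - i < k by omega)) ⟨hd, hlast⟩
    intro i j hik hjk he
    rcases le_total i j with h' | h'
    · exact key i j h' hjk he
    · exact (key j i h' hik he.symm).symm
  set l : List (Fin (n + 2)) := (List.range k).map b with hl_def
  have hlen : l.length = k := by simp [hl_def]
  have hget : ∀ i, (hi : i < k) → l[i]'(by omega) = b i := by
    intro i hi; simp [hl_def]
  have hnodup : l.Nodup := by
    refine List.Nodup.map_on ?_ (List.nodup_range (n := k))
    intro x hx y hy hxy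
    exact hbinj x y (List.mem_range.1 hx) (List.mem_range.1 hy) hxy
  have h0notmem : (0 : Fin (n + 2)) ∉ l := by
    simp only [hl_def, List.mem_map, List.mem_range]
    rintro ⟨j, hj, hbj⟩
    exact hne0 j hj hbj
  have hoffl : ∀ i : Fin (n + 2), (∀ j, j < k → i ≠ b j) → i ∉ l := by
    intro i hi
    simp only [hl_def, List.mem_map, List.mem_range]
    rintro ⟨j, hj, hbj⟩
    exact hi j hj hbj.symm
  set γ := l.formPerm with hγ_def
  have hγ_apply : ∀ j, j < k → γ (b j) = b ((j + 1) % k) := by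
    intro j hj
    have h2 := List.formPerm_apply_getElem l hnodup j (by omega)
    simp only [hlen] at h2
    rwa [hget j hj, hget _ (Nat.mod_lt _ (by omega))] at h2
  have hγ_off : ∀ x, x ∉ l → γ x = x := fun x hx => List.formPerm_apply_of_notMem hx
  have hq1b : ∀ j, q.1 (b (j + 1)) = q.2 (b j) := by
    intro j
    rw [hb_def]
    show q.1 (bchain q (j + 1)) = _
    rw [bchain_succ]
    exact q.1.apply_symm_apply _
  have hkey : ∀ j, j < k → q.1 (b ((j + 1) % k)) = q.2 (b j) := by
    intro j hj
    rcases eq_or_lt_of_le (Nat.succ_le_of_lt hj) with he | hlt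
    · have he' : j + 1 = k := he
      have hmod : (j + 1) % k = 0 := by rw [he', Nat.mod_self]
      have hbj : b (j + 1) = b 0 := by rw [he', hbk, hb0]
      rw [hmod, ← hbj]
      exact hq1b j
    · rw [Nat.mod_eq_of_lt hlt]
      exact hq1b j
  rcases hq with hB | hC
  · -- case B
    have hγinv : ∀ j, j + 1 < k → γ⁻¹ (b (j + 1)) = b j := by
      intro j hj
      have h1 := hγ_apply j (by omega)
      rw [Nat.mod_eq_of_lt hj] at h1
      rw [← h1, Equiv.Perm.inv_def, Equiv.symm_apply_apply]
    have hγinv0 : γ⁻¹ (0 : Fin (n + 2)) = 0 := by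
      rw [Equiv.Perm.inv_eq_iff_eq]
      exact (hγ_off 0 h0notmem).symm
    have hγinvlast : γ⁻¹ (b 0) = b (k - 1) := by
      have h1 := hγ_apply (k - 1) (by omega)
      rw [show (k - 1 + 1) % k = 0 by rw [Nat.sub_add_cancel hk1, Nat.mod_self]] at h1
      rw [← h1, Equiv.Perm.inv_def, Equiv.symm_apply_apply]
    have hlastval : q.2 (b (k - 1)) = lastF n := by
      rw [← hq1b (k - 1), show k - 1 + 1 = k by omega, hbk, hB.1]
    refine ⟨(q.1 * γ, q.2 * γ⁻¹), assemble _ k hk1 hbk ?_ ?_ ?_ ?_ ?_ ?_ ?_ ?_ ?_⟩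
    · intro j hj
      show q.1 (γ (b j)) = q.2 (b j)
      rw [hγ_apply j hj]
      exact hkey j hj
    · intro j hj
      show q.2 (γ⁻¹ (b (j + 1))) = q.2 (b j)
      rw [hγinv j hj]
    · show q.2 (γ⁻¹ 0) = 0
      rw [hγinv0, hB.2]
    · show q.2 (γ⁻¹ (b 0)) = lastF n
      rw [hγinvlast, hlastval]
    · intro i hi
      show q.1 i = q.1 (γ i)
      rw [hγ_off i (hoffl i hi)]
    · intro i hi0 hi
      show q.2 i = q.2 (γ⁻¹ i)
      have : γ⁻¹ i = i := by
        rw [Equiv.Perm.inv_eq_iff_eq]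
        exact (hγ_off i (hoffl i hi)).symm
      rw [this]
    · intro j hj
      constructor
      · intro h0
        have hbj : b j = 0 := q.2.injective (by rw [h0, hB.2])
        exact hne0 j (by omega) hbj
      · intro hl
        have h1 : q.1 (b (j + 1)) = q.1 (lastF n) := by rw [hq1b j, hl, hB.1]
        have h2 : b (j + 1) = b 0 := by rw [hb0]; exact q.1.injective h1
        have := hbinj (j + 1) 0 hj (by omega) h2
        omega
    · right; exact hlastval
    · rw [hlastval, if_neg (lastF_ne_zero n), hB.2]
  · -- case C
    set l' : List (Fin (n + 2)) := l ++ [0] with hl'_def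
    have hl'len : l'.length = k + 1 := by simp [hl'_def, hlen]
    have hl'nodup : l'.Nodup := by
      rw [hl'_def, List.nodup_append]
      exact ⟨hnodup, List.nodup_singleton _, fun a ha c hc => by
        simp only [List.mem_singleton] at hc; subst hc; exact fun h => h0notmem (h ▸ ha)⟩
    have hgetc : ∀ i, (hi : i < k + 1) → l'[i]'(by omega) = if i = k then 0 else b i := by
      intro i hi
      by_cases hik : i = k
      · rw [if_pos hik]
        exact List.getElem_concat_length (hik.trans hlen.symm) _
      · rw [if_neg hik]
        exact (List.getElem_append_left (by omega)).trans (hget i (by omega))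
    set ε := l'.formPerm with hε_def
    have hεc : ∀ i, i < k + 1 →
        ε (if i = k then 0 else b i) =
          if (i + 1) % (k + 1) = k then 0 else b ((i + 1) % (k + 1)) := by
      intro i hi
      have h2 := List.formPerm_apply_getElem l' hl'nodup i (by omega)
      simp only [hl'len] at h2
      rwa [hgetc i hi, hgetc ((i + 1) % (k + 1)) (Nat.mod_lt _ (by omega))] at h2
    have hε1 : ∀ j, j + 1 < k → ε (b j) = b (j + 1) := by
      intro j hj
      have h2 := hεc j (by omega)
      rw [if_neg (show j ≠ k by omega)] at h2
      rwa [show (j + 1) % (k + 1) = j + 1 from Nat.mod_eq_of_lt (by omega),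
        if_neg (show j + 1 ≠ k by omega)] at h2
    have hε2 : ε (b (k - 1)) = 0 := by
      have h2 := hεc (k - 1) (by omega)
      rw [if_neg (show k - 1 ≠ k by omega)] at h2
      rwa [show (k - 1 + 1) % (k + 1) = k by
        rw [Nat.sub_add_cancel hk1]; exact Nat.mod_eq_of_lt (by omega),
        if_pos rfl] at h2
    have hε3 : ε (0 : Fin (n + 2)) = b 0 := by
      have h2 := hεc k (by omega)
      rw [if_pos rfl] at h2
      rwa [show (k + 1) % (k + 1) = 0 from Nat.mod_self (k + 1),
        if_neg (show (0 : ℕ) ≠ k by omega)] at h2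
    have hε_off : ∀ x : Fin (n + 2), x ≠ 0 → x ∉ l → ε x = x := by
      intro x hx0 hxl
      refine List.formPerm_apply_of_notMem ?_
      simp [hl'_def, hxl, hx0]
    have hεinv1 : ∀ j, j + 1 < k → ε⁻¹ (b (j + 1)) = b j := by
      intro j hj
      rw [← hε1 j hj, Equiv.Perm.inv_def, Equiv.symm_apply_apply]
    have hεinv0 : ε⁻¹ (0 : Fin (n + 2)) = b (k - 1) := by
      rw [← hε2, Equiv.Perm.inv_def, Equiv.symm_apply_apply]
    have hεinvb0 : ε⁻¹ (b 0) = 0 := by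
      rw [← hε3, Equiv.Perm.inv_def, Equiv.symm_apply_apply]
    have hendval : q.2 (b (k - 1)) = 0 := by
      rw [← hq1b (k - 1), show k - 1 + 1 = k by omega, hbk, hC.1]
    refine ⟨(q.1 * γ, q.2 * ε⁻¹), assemble _ k hk1 hbk ?_ ?_ ?_ ?_ ?_ ?_ ?_ ?_ ?_⟩
    · intro j hj
      show q.1 (γ (b j)) = q.2 (b j)
      rw [hγ_apply j hj]
      exact hkey j hj
    · intro j hj
      show q.2 (ε⁻¹ (b (j + 1))) = q.2 (b j)
      rw [hεinv1 j hj]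
    · show q.2 (ε⁻¹ 0) = 0
      rw [hεinv0, hendval]
    · show q.2 (ε⁻¹ (b 0)) = lastF n
      rw [hεinvb0, hC.2]
    · intro i hi
      show q.1 i = q.1 (γ i)
      rw [hγ_off i (hoffl i hi)]
    · intro i hi0 hi
      show q.2 i = q.2 (ε⁻¹ i)
      have : ε⁻¹ i = i := by
        rw [Equiv.Perm.inv_eq_iff_eq]
        exact (hε_off i hi0 (hoffl i hi)).symm
      rw [this]
    · intro j hj
      constructor
      · intro h0
        have h1 : q.1 (b (j + 1)) = q.1 (lastF n) := by rw [hq1b j, h0, hC.1]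
        have h2 : b (j + 1) = b 0 := by rw [hb0]; exact q.1.injective h1
        have := hbinj (j + 1) 0 hj (by omega) h2
        omega
      · intro hl
        have hbj : b j = 0 := q.2.injective (by rw [hl, hC.2])
        exact hne0 j (by omega) hbj
    · left; exact hendval
    · rw [hendval, if_pos rfl, hC.2]

/-- Characterization of the image of `T`: a pair `q ∈ B(n) ∪ C(n)` is in the image of
`T` iff the backward alternating chain from man `n` terminates at the unmarried woman
(`n'` for `B(n)`, `1'` for `C(n)`) rather than at man `1`.  In the total-permutation
encoding, terminating at the unmarried woman means the backward chain returns to man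
`n` (via the dummy marriage edge) without first passing through man `1 = 0`. -/
theorem T_image_characterization {n : ℕ} (q : PairPerm n) (hq : InB q ∨ InC q) :
    (∃ p, InA p ∧ TStep p q) ↔
      ∃ k, 1 ≤ k ∧ bchain q k = lastF n ∧ ∀ j, 1 ≤ j → j < k → bchain q j ≠ 0 := by
  constructor
  · rintro ⟨p, hA, hT⟩
    exact forward_dir hA hT
  · exact backward_dir hq
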